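/- Let k be a field of characteristic zero, let a ∈ k*, let m, n ∈ ℤ_{≥0} with m ≤ n, and let D be the k-derivation on k[x,y] given by D = x^{m+1} ∂/∂x + a·y^{n+1} ∂/∂y, extended to k(x,y). If k(x,y)^D ≠ k, then either (1) m > 0 and n > 0, or (2) m = n = 0 and a ∈ ℚ \ {0} (i.e., a is a nonzero rational number viewed in k). -/

import Mathlib

noncomputable section Aux43
open Polynomial

/-- `k[x,y] ≃ k[Y][X]`, sending `X 0 ↦ X`, `X 1 ↦ C X`. -/
noncomputable def aux43Equiv (k : Type*) [CommSemiring k] :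
    MvPolynomial (Fin 2) k ≃ₐ[k] Polynomial (Polynomial k) :=
  (MvPolynomial.finSuccEquiv k 1).trans <| Polynomial.mapAlgEquiv <|
    (MvPolynomial.finSuccEquiv k 0).trans <| Polynomial.mapAlgEquiv <|
      MvPolynomial.isEmptyAlgEquiv k (Fin 0)

@[simp] lemma aux43Equiv_X0 (k : Type*) [CommSemiring k] :
    aux43Equiv k (MvPolynomial.X 0) = Polynomial.X := by
  simp [aux43Equiv, MvPolynomial.finSuccEquiv_X_zero]

@[simp] lemma aux43Equiv_X1 (k : Type*) [CommSemiring k] :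
    aux43Equiv k (MvPolynomial.X 1) = Polynomial.C Polynomial.X := by
  have h : (1 : Fin 2) = Fin.succ 0 := rfl
  rw [aux43Equiv, h, AlgEquiv.trans_apply, MvPolynomial.finSuccEquiv_X_succ]
  simp [MvPolynomial.finSuccEquiv_X_zero]

@[simp] lemma aux43Equiv_symm_X (k : Type*) [CommSemiring k] :
    (aux43Equiv k).symm Polynomial.X = MvPolynomial.X 0 := by
  rw [← aux43Equiv_X0 k, AlgEquiv.symm_apply_apply]

@[simp] lemma aux43Equiv_symm_CX (k : Type*) [CommSemiring k] :
    (aux43Equiv k).symm (Polynomial.C Polynomial.X) = MvPolynomial.X 1 := by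
  rw [← aux43Equiv_X1 k, AlgEquiv.symm_apply_apply]

/-- coefficient-wise `d/dy` on `k[Y][X]` as a `k`-derivation. -/
noncomputable def auxDY (k : Type*) [CommRing k] :
    Derivation k (Polynomial (Polynomial k)) (Polynomial (Polynomial k)) :=
  PolynomialModule.equivPolynomialSelf.compDer
    ((Polynomial.derivative' (R := k)).mapCoeffs)

@[simp] lemma auxDY_coeff {k : Type*} [CommRing k] (F : Polynomial (Polynomial k)) (i : ℕ) :
    (auxDY k F).coeff i = Polynomial.derivative (F.coeff i) := rfl

/-- `d/dx` on `k[Y][X]` as a `k`-derivation. -/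
noncomputable def auxDX (k : Type*) [CommRing k] :
    Derivation k (Polynomial (Polynomial k)) (Polynomial (Polynomial k)) :=
  (Polynomial.derivative' (R := Polynomial k)).restrictScalars k

@[simp] lemma auxDX_apply {k : Type*} [CommRing k] (F : Polynomial (Polynomial k)) :
    auxDX k F = Polynomial.derivative F := rfl

/-- The derivation `x^(m+1) ∂x + a y^(n+1) ∂y` on `k[Y][X]`. -/
noncomputable def auxE (k : Type*) [CommRing k] (m n : ℕ) (a : k) :
    Derivation k (Polynomial (Polynomial k)) (Polynomial (Polynomial k)) :=
  (Polynomial.X ^ (m+1) : Polynomial (Polynomial k)) • auxDX k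
    + (Polynomial.C (Polynomial.C a * Polynomial.X ^ (n+1)) :
        Polynomial (Polynomial k)) • auxDY k

lemma auxE_apply {k : Type*} [CommRing k] (m n : ℕ) (a : k) (F : Polynomial (Polynomial k)) :
    auxE k m n a F = Polynomial.X ^ (m+1) * Polynomial.derivative F
      + Polynomial.C (Polynomial.C a * Polynomial.X ^ (n+1)) * auxDY k F := by
  simp [auxE, smul_eq_mul]

end Aux43

noncomputable section Aux43b
open MvPolynomial in
lemma auxDY_X {k : Type*} [CommRing k] : auxDY k (Polynomial.X) = 0 := by
  ext i
  rw [auxDY_coeff]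
  rcases i with _ | i
  · simp
  · rcases i with _ | i <;> simp [Polynomial.coeff_X, Polynomial.coeff_one]

lemma auxDY_CX {k : Type*} [CommRing k] : auxDY k (Polynomial.C Polynomial.X) = 1 := by
  ext i
  rw [auxDY_coeff]
  rcases i with _ | i <;> simp [Polynomial.coeff_one]

/-- conjugation of a derivation by an algebra equivalence -/
noncomputable def auxConj {k A B : Type*} [CommSemiring k] [CommSemiring A] [CommSemiring B]
    [Algebra k A] [Algebra k B] (e : A ≃ₐ[k] B) (d : Derivation k B B) :
    Derivation k A A where
  toLinearMap := e.symm.toLinearMap ∘ₗ d.toLinearMap ∘ₗ e.toLinearMap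
  map_one_eq_zero' := by simp
  leibniz' a b := by
    simp only [LinearMap.coe_comp, Function.comp_apply, AlgEquiv.toLinearMap_apply,
      Derivation.coeFn_coe, map_mul, Derivation.leibniz, smul_eq_mul, map_add,
      AlgEquiv.symm_apply_apply]

lemma auxConj_apply {k A B : Type*} [CommSemiring k] [CommSemiring A] [CommSemiring B]
    [Algebra k A] [Algebra k B] (e : A ≃ₐ[k] B) (d : Derivation k B B) (f : A) :
    auxConj e d f = e.symm (d (e f)) := rfl

open MvPolynomial in
lemma auxD_eq_conj {k : Type*} [Field k] [CharZero k] (m n : ℕ) (a : k)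
    (D : Derivation k (MvPolynomial (Fin 2) k) (MvPolynomial (Fin 2) k))
    (hD : D = (X 0 ^ (m + 1) : MvPolynomial (Fin 2) k) • pderiv 0
              + (MvPolynomial.C a * X 1 ^ (n + 1) : MvPolynomial (Fin 2) k) • pderiv 1) :
    ∀ f, aux43Equiv k (D f) = auxE k m n a (aux43Equiv k f) := by
  have p10 : (pderiv (R:=k) (1 : Fin 2)) (X 0) = 0 := pderiv_X_of_ne (by decide)
  have p01 : (pderiv (R:=k) (0 : Fin 2)) (X 1) = 0 := pderiv_X_of_ne (by decide)
  have h0 : D (X 0) = auxConj (aux43Equiv k) (auxE k m n a) (X 0) := by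
    rw [hD, auxConj_apply]
    simp only [Derivation.add_apply, Derivation.smul_apply, pderiv_X_self, p10,
      smul_eq_mul, mul_one, mul_zero, add_zero, smul_zero]
    rw [aux43Equiv_X0, auxE_apply, Polynomial.derivative_X, auxDY_X, mul_zero, mul_one,
      add_zero, map_pow, aux43Equiv_symm_X]
  have h1 : D (X 1) = auxConj (aux43Equiv k) (auxE k m n a) (X 1) := by
    rw [hD, auxConj_apply]
    simp only [Derivation.add_apply, Derivation.smul_apply, pderiv_X_self, p01,
      smul_eq_mul, mul_one, mul_zero, zero_add, smul_zero]
    rw [aux43Equiv_X1, auxE_apply, Polynomial.derivative_C, auxDY_CX, mul_zero, mul_one,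
      zero_add]
    rw [show (Polynomial.C (Polynomial.C a * Polynomial.X ^ (n+1)) : Polynomial (Polynomial k))
          = algebraMap k _ a * (Polynomial.C Polynomial.X) ^ (n+1) by
        rw [map_mul, map_pow]; rfl]
    rw [map_mul, AlgEquiv.commutes, map_pow, aux43Equiv_symm_CX, MvPolynomial.algebraMap_eq]
  have key : D = auxConj (aux43Equiv k) (auxE k m n a) := by
    apply MvPolynomial.derivation_ext
    intro i
    fin_cases i
    · exact h0
    · exact h1
  intro f
  rw [key, auxConj_apply, AlgEquiv.apply_symm_apply]

end Aux43b

noncomputable section Aux43c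
variable {k : Type*} [CommRing k]

lemma auxE_coeff0 (n : ℕ) (a : k) (F : Polynomial (Polynomial k)) (i : ℕ) :
    (auxE k 0 n a F).coeff i = (i : Polynomial k) * F.coeff i
      + (Polynomial.C a * Polynomial.X ^ (n+1)) * Polynomial.derivative (F.coeff i) := by
  rw [auxE_apply, Polynomial.coeff_add, Polynomial.coeff_C_mul, auxDY_coeff, zero_add,
    pow_one]
  congr 1
  rcases i with _ | i
  · simp
  · rw [Polynomial.coeff_X_mul, Polynomial.coeff_derivative]
    push_cast
    ring

end Aux43c

noncomputable section Aux43d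
variable {k : Type*} [Field k] [CharZero k]

lemma auxClaim1 {n : ℕ} (hn : 0 < n) {a : k} (ha : a ≠ 0) (h₀ q : Polynomial k) (i : ℕ)
    (hq : q ≠ 0)
    (heq : (i : Polynomial k) * q
      + (Polynomial.C a * Polynomial.X ^ (n+1)) * Polynomial.derivative q = h₀ * q) :
    h₀.coeff 0 = (i : k) := by
  have hX : (Polynomial.C a * Polynomial.X ^ (n+1) : Polynomial k) ≠ 0 :=
    mul_ne_zero (by simpa using ha) (pow_ne_zero _ Polynomial.X_ne_zero)
  have hrearr : (h₀ - Polynomial.C (i : k)) * q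
      = Polynomial.C a * Polynomial.X ^ (n+1) * Polynomial.derivative q := by
    rw [sub_mul, Polynomial.C_eq_natCast]
    linear_combination -heq
  by_cases hq' : Polynomial.derivative q = 0
  · rw [hq', mul_zero, mul_eq_zero] at hrearr
    rcases hrearr with h | h
    · have h2 : h₀ = Polynomial.C (i:k) := sub_eq_zero.mp h
      rw [h2, Polynomial.coeff_C_zero]
    · exact absurd h hq
  · by_contra hne
    have hw : h₀ - Polynomial.C (i:k) ≠ 0 := by
      intro h
      apply hne
      have := congrArg (fun p => Polynomial.coeff p 0) h
      simpa [sub_eq_zero] using this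
    have hw0 : (h₀ - Polynomial.C (i:k)).coeff 0 ≠ 0 := by
      simpa [Polynomial.coeff_sub, sub_eq_zero] using hne
    have hntdw : (h₀ - Polynomial.C (i:k)).natTrailingDegree = 0 :=
      Polynomial.natTrailingDegree_eq_zero.mpr (Or.inr hw0)
    have hLHS := Polynomial.natTrailingDegree_mul hw hq
    have hRHS := Polynomial.natTrailingDegree_mul hX hq'
    have hXn : (Polynomial.C a * Polynomial.X ^ (n+1) : Polynomial k).natTrailingDegree
        = n + 1 := by
      rw [Polynomial.natTrailingDegree_mul (by simpa using ha)
          (pow_ne_zero _ Polynomial.X_ne_zero),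
        Polynomial.natTrailingDegree_C, Polynomial.natTrailingDegree_X_pow, zero_add]
    -- q.natTrailingDegree ≤ q'.natTrailingDegree + 1
    have hle : q.natTrailingDegree ≤ (Polynomial.derivative q).natTrailingDegree + 1 := by
      apply Polynomial.natTrailingDegree_le_of_ne_zero
      have h1 : (Polynomial.derivative q).coeff (Polynomial.derivative q).natTrailingDegree
          ≠ 0 := by
        have := Polynomial.trailingCoeff_nonzero_iff_nonzero.mpr hq'
        rwa [Polynomial.trailingCoeff] at this
      rw [Polynomial.coeff_derivative] at h1
      intro h2
      apply h1
      rw [h2, zero_mul]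
    have := congrArg Polynomial.natTrailingDegree hrearr
    rw [hLHS, hRHS, hntdw, hXn, zero_add] at this
    omega

end Aux43d

noncomputable section Aux43e
open Polynomial
variable {k : Type*} [Field k] [CharZero k]

set_option maxHeartbeats 1000000 in
lemma auxCaseNpos {n : ℕ} (hn : 0 < n) {a : k} (ha : a ≠ 0)
    (F G : Polynomial (Polynomial k)) (hF : F ≠ 0) (hG : G ≠ 0)
    (hrel : IsRelPrime F G) (h₀ : Polynomial k)
    (eqF : ∀ i : ℕ, (i : Polynomial k) * F.coeff i
      + (Polynomial.C a * Polynomial.X ^ (n+1)) * Polynomial.derivative (F.coeff i)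
      = h₀ * F.coeff i)
    (eqG : ∀ i : ℕ, (i : Polynomial k) * G.coeff i
      + (Polynomial.C a * Polynomial.X ^ (n+1)) * Polynomial.derivative (G.coeff i)
      = h₀ * G.coeff i) :
    ∃ α β : k, F = Polynomial.C (Polynomial.C α) ∧ G = Polynomial.C (Polynomial.C β) := by
  -- all indices with nonzero coefficient are equal to h₀.coeff 0
  have keyF : ∀ i, F.coeff i ≠ 0 → h₀.coeff 0 = (i : k) :=
    fun i hi => auxClaim1 hn ha h₀ (F.coeff i) i hi (eqF i)
  have keyG : ∀ i, G.coeff i ≠ 0 → h₀.coeff 0 = (i : k) :=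
    fun i hi => auxClaim1 hn ha h₀ (G.coeff i) i hi (eqG i)
  have hdF : F.coeff F.natDegree ≠ 0 := Polynomial.leadingCoeff_ne_zero.mpr hF
  have hdG : G.coeff G.natDegree ≠ 0 := Polynomial.leadingCoeff_ne_zero.mpr hG
  have hdeq : G.natDegree = F.natDegree := by
    have h1 := keyF _ hdF
    have h2 := keyG _ hdG
    have : ((G.natDegree : k)) = ((F.natDegree : k)) := by rw [← h1, ← h2]
    exact_mod_cast this
  -- F and G are supported only in degree d := F.natDegree
  set d := F.natDegree with hd
  have hFsupp : ∀ i : ℕ, i ≠ d → F.coeff i = 0 := by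
    intro i hi
    by_contra hne
    have : ((i:k)) = ((d:k)) := by rw [← keyF i hne, keyF _ hdF]
    exact hi (by exact_mod_cast this)
  have hGsupp : ∀ i : ℕ, i ≠ d → G.coeff i = 0 := by
    intro i hi
    by_contra hne
    have : ((i:k)) = ((d:k)) := by rw [← keyG i hne, keyF _ hdF]
    exact hi (by exact_mod_cast this)
  -- d = 0, since otherwise X divides both F and G
  have hd0 : d = 0 := by
    by_contra hdne
    have hXF : Polynomial.X ∣ F := Polynomial.X_dvd_iff.mpr (hFsupp 0 (Ne.symm hdne))
    have hXG : Polynomial.X ∣ G := Polynomial.X_dvd_iff.mpr (hGsupp 0 (Ne.symm hdne))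
    exact Polynomial.not_isUnit_X (hrel hXF hXG)
  have hFC : F = Polynomial.C (F.coeff 0) :=
    Polynomial.eq_C_of_natDegree_eq_zero (hd ▸ hd0 : F.natDegree = 0)
  have hGC : G = Polynomial.C (G.coeff 0) :=
    Polynomial.eq_C_of_natDegree_eq_zero (hdeq.trans (hd ▸ hd0) : G.natDegree = 0)
  set q := F.coeff 0 with hqdef
  set r := G.coeff 0 with hrdef
  have hqne : q ≠ 0 := fun h => hF (by rw [hFC, h, map_zero])
  have hrne : r ≠ 0 := fun h => hG (by rw [hGC, h, map_zero])
  have heqq := eqF 0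
  have heqr := eqG 0
  rw [Nat.cast_zero, zero_mul, zero_add] at heqq heqr
  -- cross relation
  have hX : (Polynomial.C a * Polynomial.X ^ (n+1) : Polynomial k) ≠ 0 :=
    mul_ne_zero (by simpa using ha) (pow_ne_zero _ Polynomial.X_ne_zero)
  have hcross : q * Polynomial.derivative r = Polynomial.derivative q * r := by
    apply mul_left_cancel₀ hX
    linear_combination q * heqr - r * heqq
  -- coprimality of q and r
  have hrelqr : IsRelPrime q r := by
    intro w hwq hwr
    have h1 : Polynomial.C w ∣ F := by rw [hFC]; exact map_dvd Polynomial.C hwq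
    have h2 : Polynomial.C w ∣ G := by rw [hGC]; exact map_dvd Polynomial.C hwr
    exact Polynomial.isUnit_C.mp (hrel h1 h2)
  have hderiv : ∀ s t : Polynomial k, s ≠ 0 → IsRelPrime s t →
      s ∣ Polynomial.derivative s → Polynomial.derivative s = 0 := by
    intro s t hs _ hdvd
    by_contra hs'
    have h1 : s.natDegree ≠ 0 := by
      intro h0
      exact hs' (by rw [Polynomial.eq_C_of_natDegree_eq_zero h0]; simp)
    have h2 := Polynomial.natDegree_derivative_lt h1
    have h3 := Polynomial.natDegree_le_of_dvd hdvd hs'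
    omega
  have hq' : Polynomial.derivative q = 0 := by
    apply hderiv q r hqne hrelqr
    exact hrelqr.dvd_of_dvd_mul_right ⟨Polynomial.derivative r, hcross.symm⟩
  have hr' : Polynomial.derivative r = 0 := by
    apply hderiv r q hrne hrelqr.symm
    apply hrelqr.symm.dvd_of_dvd_mul_right
    exact ⟨Polynomial.derivative q, by linear_combination hcross⟩
  refine ⟨q.coeff 0, r.coeff 0, ?_, ?_⟩
  · rw [hFC]; exact congrArg _ (Polynomial.eq_C_of_derivative_eq_zero hq')
  · rw [hGC]; exact congrArg _ (Polynomial.eq_C_of_derivative_eq_zero hr')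

end Aux43e

noncomputable section Aux43f
variable {k : Type*} [Field k] [CharZero k]

lemma auxCaseIrr {a : k} (ha : a ≠ 0) (hirr : ∀ q : ℚ, a ≠ (q : k))
    (F G : Polynomial (Polynomial k)) (hF : F ≠ 0) (hG : G ≠ 0)
    (hrel : IsRelPrime F G) (h₀ : Polynomial k)
    (eqF : ∀ i : ℕ, (i : Polynomial k) * F.coeff i
      + (Polynomial.C a * Polynomial.X) * Polynomial.derivative (F.coeff i)
      = h₀ * F.coeff i)
    (eqG : ∀ i : ℕ, (i : Polynomial k) * G.coeff i
      + (Polynomial.C a * Polynomial.X) * Polynomial.derivative (G.coeff i)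
      = h₀ * G.coeff i) :
    ∃ α β : k, F = Polynomial.C (Polynomial.C α) ∧ G = Polynomial.C (Polynomial.C β) := by
  have hdF : F.coeff F.natDegree ≠ 0 := Polynomial.leadingCoeff_ne_zero.mpr hF
  -- Step A : h₀ is a constant
  have hbound : ∀ q : Polynomial k, q ≠ 0 →
      ∀ i : ℕ, ((i : Polynomial k) * q
        + (Polynomial.C a * Polynomial.X) * Polynomial.derivative q = h₀ * q) →
      h₀.natDegree = 0 := by
    intro q hq i heq
    by_cases h0 : h₀ = 0
    · rw [h0]; exact Polynomial.natDegree_zero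
    have hle : (h₀ * q).natDegree ≤ q.natDegree := by
      rw [← heq]
      apply le_trans (Polynomial.natDegree_add_le _ _)
      apply max_le
      · apply le_trans (Polynomial.natDegree_mul_le)
        simp [Polynomial.natDegree_natCast]
      · by_cases hq' : Polynomial.derivative q = 0
        · simp [hq']
        · have hqd : q.natDegree ≠ 0 := by
            intro hz
            exact hq' (by rw [Polynomial.eq_C_of_natDegree_eq_zero hz]; simp)
          apply le_trans (Polynomial.natDegree_mul_le)
          have h1 : (Polynomial.C a * Polynomial.X : Polynomial k).natDegree ≤ 1 :=
            le_trans Polynomial.natDegree_mul_le (by simp)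
          have h2 := Polynomial.natDegree_derivative_lt hqd
          omega
    rw [Polynomial.natDegree_mul h0 hq] at hle
    omega
  have hndh : h₀.natDegree = 0 :=
    hbound (F.coeff F.natDegree) hdF F.natDegree (eqF F.natDegree)
  set c := h₀.coeff 0 with hcdef
  have hc : h₀ = Polynomial.C c := Polynomial.eq_C_of_natDegree_eq_zero hndh
  -- Step B : coefficient equation
  have coefb : ∀ (i j : ℕ) (q : Polynomial k),
      ((i : Polynomial k) * q
        + (Polynomial.C a * Polynomial.X) * Polynomial.derivative q = h₀ * q) →
      q.coeff j ≠ 0 → (i : k) + a * (j : k) = c := by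
    intro i j q heq hcj
    rw [hc] at heq
    have heq2 : Polynomial.C ((i:ℕ):k) * q
        + Polynomial.C a * (Polynomial.X * Polynomial.derivative q)
        = Polynomial.C c * q := by
      rw [Polynomial.C_eq_natCast]; linear_combination heq
    have hXq : (Polynomial.X * Polynomial.derivative q).coeff j
        = (j : k) * q.coeff j := by
      rcases j with _ | s
      · simp
      · rw [Polynomial.coeff_X_mul, Polynomial.coeff_derivative]
        push_cast
        ring
    have hcoeff := congrArg (fun p => Polynomial.coeff p j) heq2
    simp only [Polynomial.coeff_add, Polynomial.coeff_C_mul] at hcoeff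
    rw [hXq] at hcoeff
    have hz : ((i : k) + a * (j : k) - c) * q.coeff j = 0 := by linear_combination hcoeff
    rcases mul_eq_zero.mp hz with h | h
    · exact sub_eq_zero.mp h
    · exact absurd h hcj
  -- Step C : (i, j) with (i:k) + a j = c is unique
  have uniq : ∀ i j i' j' : ℕ, (i : k) + a * (j : k) = c → (i' : k) + a * (j' : k) = c →
      i = i' ∧ j = j' := by
    intro i j i' j' h1 h2
    by_cases hjj : j = j'
    · subst hjj
      refine ⟨?_, rfl⟩
      have : ((i : k)) = ((i' : k)) := by linear_combination h1 - h2
      exact_mod_cast this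
    · exfalso
      have hjk : ((j : k)) ≠ ((j' : k)) := fun h => hjj (by exact_mod_cast h)
      have hden : ((j : k)) - ((j' : k)) ≠ 0 := sub_ne_zero.mpr hjk
      have hval : a = (((i' : k)) - ((i : k))) / (((j : k)) - ((j' : k))) := by
        rw [eq_div_iff hden]
        linear_combination h1 - h2
      apply hirr ((((i' : ℚ)) - ((i : ℚ))) / (((j : ℚ)) - ((j' : ℚ))))
      rw [hval]
      push_cast
      ring
  -- Step D
  set i₀ := F.natDegree with hi₀
  set j₀ := (F.coeff i₀).natDegree with hj₀
  have hbase : ((i₀ : k)) + a * ((j₀ : k)) = c :=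
    coefb i₀ j₀ (F.coeff i₀) (eqF i₀) (Polynomial.leadingCoeff_ne_zero.mpr hdF)
  have PF : ∀ i j : ℕ, (F.coeff i).coeff j ≠ 0 → i = i₀ ∧ j = j₀ := by
    intro i j hij
    have h1 : (F.coeff i) ≠ 0 := fun h => hij (by rw [h]; simp)
    exact uniq i j i₀ j₀ (coefb i j (F.coeff i) (eqF i) hij) hbase
  have PG : ∀ i j : ℕ, (G.coeff i).coeff j ≠ 0 → i = i₀ ∧ j = j₀ := by
    intro i j hij
    exact uniq i j i₀ j₀ (coefb i j (G.coeff i) (eqG i) hij) hbase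
  -- i₀ = 0
  have hi0 : i₀ = 0 := by
    by_contra hne
    have hF0 : F.coeff 0 = 0 := by
      ext j
      rw [Polynomial.coeff_zero]
      by_contra hz
      exact hne ((PF 0 j hz).1.symm)
    have hG0 : G.coeff 0 = 0 := by
      ext j
      rw [Polynomial.coeff_zero]
      by_contra hz
      exact hne ((PG 0 j hz).1.symm)
    exact Polynomial.not_isUnit_X
      (hrel (Polynomial.X_dvd_iff.mpr hF0) (Polynomial.X_dvd_iff.mpr hG0))
  have hFC : F = Polynomial.C (F.coeff 0) :=
    Polynomial.eq_C_of_natDegree_eq_zero (hi₀ ▸ hi0)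
  have hGdeg : G.natDegree = 0 := by
    by_contra hne
    have := (PG G.natDegree (G.coeff G.natDegree).natDegree
      (Polynomial.leadingCoeff_ne_zero.mpr (Polynomial.leadingCoeff_ne_zero.mpr hG))).1
    omega
  have hGC : G = Polynomial.C (G.coeff 0) :=
    Polynomial.eq_C_of_natDegree_eq_zero hGdeg
  -- j₀ = 0
  have hj0 : j₀ = 0 := by
    by_contra hne
    have hq0 : (F.coeff 0).coeff 0 = 0 := by
      by_contra hz
      exact hne ((PF 0 0 hz).2.symm)
    have hr0 : (G.coeff 0).coeff 0 = 0 := by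
      by_contra hz
      exact hne ((PG 0 0 hz).2.symm)
    have h1 : Polynomial.C (Polynomial.X : Polynomial k) ∣ F := by
      rw [hFC]; exact map_dvd Polynomial.C (Polynomial.X_dvd_iff.mpr hq0)
    have h2 : Polynomial.C (Polynomial.X : Polynomial k) ∣ G := by
      rw [hGC]; exact map_dvd Polynomial.C (Polynomial.X_dvd_iff.mpr hr0)
    exact Polynomial.not_isUnit_X (Polynomial.isUnit_C.mp (hrel h1 h2))
  have hFdeg2 : (F.coeff 0).natDegree = 0 := by
    have h := hj₀.symm.trans hj0
    rwa [hi0] at h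
  have hGc0 : G.coeff 0 ≠ 0 := by
    have hlc := Polynomial.leadingCoeff_ne_zero.mpr hG
    rwa [Polynomial.leadingCoeff, hGdeg] at hlc
  have hGdeg2 : (G.coeff 0).natDegree = 0 := by
    have hz : (G.coeff 0).coeff (G.coeff 0).natDegree ≠ 0 :=
      Polynomial.leadingCoeff_ne_zero.mpr hGc0
    have := (PG 0 (G.coeff 0).natDegree hz).2
    rw [this]
    exact hj0
  refine ⟨(F.coeff 0).coeff 0, (G.coeff 0).coeff 0, ?_, ?_⟩
  · conv_lhs => rw [hFC]
    exact congrArg _ (Polynomial.eq_C_of_natDegree_eq_zero hFdeg2)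
  · conv_lhs => rw [hGC]
    exact congrArg _ (Polynomial.eq_C_of_natDegree_eq_zero hGdeg2)

end Aux43f


open MvPolynomial

/-- **Lemma 4.3.** Let `k` be a field of characteristic zero, `a ∈ k*`, `m, n ≥ 0` with
`m ≤ n`, and `D = x^(m+1) ∂x + a y^(n+1) ∂y` on `k[x,y]`, extended to the rational
function field `K = k(x,y)` (the extension `D'` is pinned down by compatibility with `D`).
If `k(x,y)^D ≠ k`, then either `m, n > 0`, or `m = n = 0` and `a` is a nonzero rational
number (viewed in `k`). -/
theorem rational_kernel_nontrivial_cases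
    (k : Type*) [Field k] [CharZero k]
    (K : Type*) [Field K] [Algebra (MvPolynomial (Fin 2) k) K]
    [IsFractionRing (MvPolynomial (Fin 2) k) K]
    [Algebra k K] [IsScalarTower k (MvPolynomial (Fin 2) k) K]
    (m n : ℕ) (hmn : m ≤ n) (a : k) (ha : a ≠ 0)
    (D : Derivation k (MvPolynomial (Fin 2) k) (MvPolynomial (Fin 2) k))
    (hD : D = (X 0 ^ (m + 1) : MvPolynomial (Fin 2) k) • pderiv 0
              + (C a * X 1 ^ (n + 1) : MvPolynomial (Fin 2) k) • pderiv 1)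
    (D' : Derivation k K K)
    (hD' : ∀ p : MvPolynomial (Fin 2) k,
      D' (algebraMap (MvPolynomial (Fin 2) k) K p)
        = algebraMap (MvPolynomial (Fin 2) k) K (D p))
    (hker' : ∃ u : K, D' u = 0 ∧ ∀ c : k, u ≠ algebraMap k K c) :
    (0 < m ∧ 0 < n) ∨ (m = 0 ∧ n = 0 ∧ ∃ q : ℚ, q ≠ 0 ∧ a = (q : k)) := by
  by_cases hm : 0 < m
  · exact Or.inl ⟨hm, lt_of_lt_of_le hm hmn⟩
  have hm0 : m = 0 := by omega
  subst hm0
  right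
  obtain ⟨u, hu0, hu⟩ := hker'
  set P := MvPolynomial (Fin 2) k with hP
  have hInj : Function.Injective (algebraMap P K) := IsFractionRing.injective P K
  obtain ⟨f0, g0, hg0mem, hdiv⟩ := IsFractionRing.div_surjective (A := P) u
  have hg0ne : g0 ≠ 0 := nonZeroDivisors.ne_zero hg0mem
  obtain ⟨f, g, c, hrel, hcf, hcg⟩ :=
    UniqueFactorizationMonoid.exists_reduced_factors' f0 g0 hg0ne
  have hcne : c ≠ 0 := fun h => hg0ne (by rw [← hcg, h, zero_mul])
  have hgne : g ≠ 0 := fun h => hg0ne (by rw [← hcg, h, mul_zero])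
  have hAg : algebraMap P K g ≠ 0 := (map_ne_zero_iff _ hInj).mpr hgne
  have hAc : algebraMap P K c ≠ 0 := (map_ne_zero_iff _ hInj).mpr hcne
  have hudiv : u = algebraMap P K f / algebraMap P K g := by
    rw [← hdiv, ← hcf, ← hcg, map_mul, map_mul, mul_div_mul_left _ _ hAc]
  have hueq : u * algebraMap P K g = algebraMap P K f := by
    rw [hudiv, div_mul_cancel₀ _ hAg]
  have hfne : f ≠ 0 := by
    intro h
    apply hu 0
    rw [hudiv, h, map_zero, map_zero, zero_div]
  -- the fundamental relation D f * g = f * D g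
  have key : D f * g = f * D g := by
    apply hInj
    have hDu : algebraMap P K (D f) = u * algebraMap P K (D g) := by
      have h1 := congrArg D' hueq
      rw [Derivation.leibniz, hu0, smul_zero, add_zero, hD' g, hD' f, smul_eq_mul] at h1
      exact h1.symm
    rw [map_mul, map_mul, hDu, mul_comm u _, mul_assoc, hueq]
    ring
  have hfdvd : f ∣ D f := hrel.dvd_of_dvd_mul_right ⟨D g, key⟩
  obtain ⟨h, hDf⟩ := hfdvd
  have hDg : D g = g * h := by
    apply mul_left_cancel₀ hfne
    rw [← key, hDf]
    ring
  -- transfer to k[Y][X]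
  have hconj := auxD_eq_conj 0 n a D hD
  set e := aux43Equiv k with he
  set F := e f with hF
  set G := e g with hG
  set H := e h with hH
  have hFH : auxE k 0 n a F = F * H := by rw [← hconj f, hDf, map_mul]
  have hGH : auxE k 0 n a G = G * H := by rw [← hconj g, hDg, map_mul]
  have hFne : F ≠ 0 := fun h0 => hfne (e.injective (h0.trans (map_zero e).symm))
  have hGne : G ≠ 0 := fun h0 => hgne (e.injective (h0.trans (map_zero e).symm))
  have hrelFG : IsRelPrime F G := by
    intro d hd1 hd2
    have h1 : e.symm d ∣ f := by
      obtain ⟨w, hw⟩ := hd1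
      exact ⟨e.symm w, e.injective (by
        rw [map_mul, e.apply_symm_apply, e.apply_symm_apply]; exact hw)⟩
    have h2 : e.symm d ∣ g := by
      obtain ⟨w, hw⟩ := hd2
      exact ⟨e.symm w, e.injective (by
        rw [map_mul, e.apply_symm_apply, e.apply_symm_apply]; exact hw)⟩
    have h3 := (hrel h1 h2).map e
    rwa [e.apply_symm_apply] at h3
  -- H is a constant polynomial
  have hndH : H.natDegree = 0 := by
    by_cases hH0 : H = 0
    · rw [hH0, Polynomial.natDegree_zero]
    have hle : (F * H).natDegree ≤ F.natDegree := by
      rw [← hFH]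
      refine Polynomial.natDegree_le_iff_coeff_eq_zero.mpr fun N hN => ?_
      rw [auxE_coeff0, Polynomial.coeff_eq_zero_of_natDegree_lt hN]
      simp
    rw [Polynomial.natDegree_mul hFne hH0] at hle
    omega
  have hHC : H = Polynomial.C (H.coeff 0) := Polynomial.eq_C_of_natDegree_eq_zero hndH
  set h₀ := H.coeff 0 with hh₀
  have eqF : ∀ i : ℕ, (i : Polynomial k) * F.coeff i
      + (Polynomial.C a * Polynomial.X ^ (n+1)) * Polynomial.derivative (F.coeff i)
      = h₀ * F.coeff i := by
    intro i
    have hco := congrArg (fun p => Polynomial.coeff p i) hFH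
    rw [auxE_coeff0, hHC, Polynomial.coeff_mul_C] at hco
    exact hco.trans (mul_comm _ _)
  have eqG : ∀ i : ℕ, (i : Polynomial k) * G.coeff i
      + (Polynomial.C a * Polynomial.X ^ (n+1)) * Polynomial.derivative (G.coeff i)
      = h₀ * G.coeff i := by
    intro i
    have hco := congrArg (fun p => Polynomial.coeff p i) hGH
    rw [auxE_coeff0, hHC, Polynomial.coeff_mul_C] at hco
    exact hco.trans (mul_comm _ _)
  -- if F and G are constants we contradict the nontriviality of u
  have hconst : ∀ α β : k, F = Polynomial.C (Polynomial.C α)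
      → G = Polynomial.C (Polynomial.C β) → False := by
    intro α β hFα hGβ
    have hcomm : ∀ γ : k, e (MvPolynomial.C γ) = Polynomial.C (Polynomial.C γ) := by
      intro γ
      rw [show (MvPolynomial.C γ : P) = algebraMap k P γ from rfl, AlgEquiv.commutes]
      rfl
    have hfc : f = MvPolynomial.C α := e.injective (hFα.trans (hcomm α).symm)
    have hgc : g = MvPolynomial.C β := e.injective (hGβ.trans (hcomm β).symm)
    have hmapc : ∀ γ : k, algebraMap P K (MvPolynomial.C γ) = algebraMap k K γ := by
      intro γ
      rw [show (MvPolynomial.C γ : P) = algebraMap k P γ from rfl,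
        ← IsScalarTower.algebraMap_apply]
    apply hu (α / β)
    rw [hudiv, hfc, hgc, hmapc, hmapc, ← map_div₀]
  -- n must be zero
  have hn0 : n = 0 := by
    by_contra hne
    obtain ⟨α, β, hFα, hGβ⟩ := auxCaseNpos (Nat.pos_of_ne_zero hne) ha F G hFne hGne
      hrelFG h₀ eqF eqG
    exact hconst α β hFα hGβ
  subst hn0
  refine ⟨rfl, rfl, ?_⟩
  by_contra hnr
  push_neg at hnr
  have hirr : ∀ q : ℚ, a ≠ (q : k) := by
    intro q
    rcases eq_or_ne q 0 with hq | hq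
    · rw [hq]; simpa using ha
    · exact hnr q hq
  simp only [zero_add, pow_one] at eqF eqG
  obtain ⟨α, β, hFα, hGβ⟩ := auxCaseIrr ha hirr F G hFne hGne hrelFG h₀ eqF eqG
  exact hconst α β hFα hGβ
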